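/- For every r₁ > 0 and every r ∈ (0, r₁), the quantity τ_r := ln((12r₁ − 2r)/(12r₁ − 3r)) / ln((6r₁ − r)/(2r₁)) satisfies τ_r ≥ r / (12 r₁ ln 3); in particular τ_r / r ≥ 1 / (12 r₁ ln 3). -/

import Mathlib

/-- For `0 < r < r₁`, the quantity
`τ_r = ln((12r₁ - 2r)/(12r₁ - 3r)) / ln((6r₁ - r)/(2r₁))` satisfies
`τ_r ≥ r/(12 r₁ ln 3)`; in particular `τ_r / r ≥ 1/(12 r₁ ln 3)`. -/
theorem stmt_5 (r₁ r : ℝ) (h1 : 0 < r₁) (hr0 : 0 < r) (hr1 : r < r₁) :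
    r / (12 * r₁ * Real.log 3) ≤
      Real.log ((12 * r₁ - 2 * r) / (12 * r₁ - 3 * r)) /
        Real.log ((6 * r₁ - r) / (2 * r₁)) ∧
    1 / (12 * r₁ * Real.log 3) ≤
      (Real.log ((12 * r₁ - 2 * r) / (12 * r₁ - 3 * r)) /
        Real.log ((6 * r₁ - r) / (2 * r₁))) / r := by
  set x : ℝ := (12 * r₁ - 2 * r) / (12 * r₁ - 3 * r) with hx
  set y : ℝ := (6 * r₁ - r) / (2 * r₁) with hy
  have hden : (0:ℝ) < 12 * r₁ - 3 * r := by linarith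
  have hxpos : 0 < x := div_pos (by linarith) hden
  -- numerator lower bound
  have hN : r / (12 * r₁) ≤ Real.log x := by
    have := Real.one_sub_inv_le_log_of_pos hxpos
    have hxinv : x⁻¹ = (12 * r₁ - 3 * r) / (12 * r₁ - 2 * r) := by
      rw [hx, inv_div]
    have h2 : r / (12 * r₁) ≤ 1 - x⁻¹ := by
      rw [hxinv]
      have hb : (12 * r₁ - 2 * r) ≠ 0 := by linarith
      have heq : 1 - (12 * r₁ - 3 * r) / (12 * r₁ - 2 * r) = r / (12 * r₁ - 2 * r) := by
        rw [one_sub_div hb]; congr 1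
        ring
      rw [heq]
      exact div_le_div_of_nonneg_left hr0.le (by linarith) (by linarith)
    linarith
  -- denominator bounds
  have hy1 : 1 < y := by
    rw [hy, lt_div_iff₀ (by linarith)]
    linarith
  have hD0 : 0 < Real.log y := Real.log_pos hy1
  have hD3 : Real.log y ≤ Real.log 3 := by
    apply Real.log_le_log (by linarith)
    rw [hy, div_le_iff₀ (by linarith)]
    linarith
  have hlog3 : 0 < Real.log 3 := Real.log_pos (by norm_num)
  have hNpos : 0 ≤ Real.log x := le_trans (by positivity) hN
  have key : r / (12 * r₁ * Real.log 3) ≤ Real.log x / Real.log y := by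
    have h1' : Real.log x / Real.log 3 ≤ Real.log x / Real.log y :=
      div_le_div_of_nonneg_left hNpos hD0 hD3
    have h2' : r / (12 * r₁ * Real.log 3) ≤ Real.log x / Real.log 3 := by
      rw [div_le_div_iff₀ (by positivity) hlog3]
      calc r * Real.log 3 = (r / (12 * r₁)) * (12 * r₁ * Real.log 3) := by
            field_simp
        _ ≤ Real.log x * (12 * r₁ * Real.log 3) := by
            apply mul_le_mul_of_nonneg_right hN (by positivity)
    linarith
  refine ⟨key, ?_⟩
  rw [ge_iff_le.symm, ge_iff_le, le_div_iff₀ hr0]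
  calc 1 / (12 * r₁ * Real.log 3) * r = r / (12 * r₁ * Real.log 3) := by ring
    _ ≤ Real.log x / Real.log y := key
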